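/- Let U ⊆ ℝ^m × S^n be open and let p,q ≥ 0 with p+q ≤ n. If the W-SRCQ holds at every z ∈ U ∩ M̃_{p,q}, then for every integer q' with 0 ≤ q' ≤ q the W-SRCQ holds at every z ∈ U ∩ M̃_{p,q'}. -/

import Mathlib

open scoped Classical RealInnerProductSpace
open Matrix Set

noncomputable section

abbrev Mat (n : ℕ) : Type := Matrix (Fin n) (Fin n) ℝ

abbrev Em (m : ℕ) : Type := EuclideanSpace ℝ (Fin m)

attribute [instance] Matrix.frobeniusNormedAddCommGroup Matrix.frobeniusNormedSpace

/-- The trace (Frobenius) inner product `⟨A,B⟩ = tr(AᵀB)` on matrices; for symmetric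
matrices this is `tr(AB)`. -/
def minner {n : ℕ} (A B : Mat n) : ℝ := (Aᵀ * B).trace

/-- `P` is an orthogonal matrix. -/
def IsOrthoMat {n : ℕ} (P : Mat n) : Prop := P * Pᵀ = 1 ∧ Pᵀ * P = 1

/-- `(P, lam)` is an eigenvalue decomposition of `A` with orthogonal `P` and
nonincreasing eigenvalue vector `lam`: `A = P·Diag(lam)·Pᵀ`. -/
def IsEigDecomp {n : ℕ} (A P : Mat n) (lam : Fin n → ℝ) : Prop :=
  IsOrthoMat P ∧ Antitone lam ∧ A = P * Matrix.diagonal lam * Pᵀ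

/-- The stratum `M_{p,q}` of symmetric matrices with exactly `p` positive and `q` negative
eigenvalues. -/
def stratum (n p q : ℕ) : Set (Mat n) :=
  {A | ∃ P lam, IsEigDecomp A P lam ∧
    {i : Fin n | 0 < lam i}.ncard = p ∧ {i : Fin n | lam i < 0}.ncard = q}

/-- The metric projection `Π₊` onto the positive semidefinite cone (defined through an
eigenvalue decomposition; the value is independent of the choice of decomposition). -/
noncomputable def piPlus {n : ℕ} (A : Mat n) : Mat n :=
  if h : ∃ P lam, IsEigDecomp A P lam then
    h.choose * Matrix.diagonal (fun i => max (h.choose_spec.choose i) 0) * h.chooseᵀ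
  else 0

variable {m n : ℕ}

/-- `G(z) = g(x) + y`. -/
def Gmap (g : Em m → Mat n) (z : Em m × Mat n) : Mat n := g z.1 + z.2

/-- The adjoint `∇g(x) : Sⁿ → ℝᵐ` of the derivative `g'(x)`, characterized by
`⟨∇g(x)H, v⟩ = ⟨H, g'(x)v⟩`. -/
def gradg (g : Em m → Mat n) (x : Em m) (H : Mat n) : Em m :=
  (EuclideanSpace.equiv (Fin m) ℝ).symm
    fun k => (Hᵀ * fderiv ℝ g x (EuclideanSpace.single k 1)).trace

/-- The Lagrangian `L(x,y) = f(x) + ⟨y, g(x)⟩`. -/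
def Lfun (f : Em m → ℝ) (g : Em m → Mat n) (x : Em m) (y : Mat n) : ℝ :=
  f x + minner y (g x)

/-- The Hessian `∇²ₓₓL(x,y)` of `x ↦ L(x,y)`, as a continuous linear map `ℝᵐ → ℝᵐ`. -/
def hessL (f : Em m → ℝ) (g : Em m → Mat n) (x : Em m) (y : Mat n) : Em m →L[ℝ] Em m :=
  fderiv ℝ (fun u => gradient (fun w => Lfun f g w y) u) x

/-- The KKT mapping `F(z) = (∇f(x) + ∇g(x)y, −g(x) + Π₊(G(z)))`. -/
def KKTF (f : Em m → ℝ) (g : Em m → Mat n) (z : Em m × Mat n) : Em m × Mat n :=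
  (gradient f z.1 + gradg g z.1 z.2, - g z.1 + piPlus (Gmap g z))

/-- The lifted stratum `M̃_{p,q} = {z = (x,y) ∈ ℝᵐ × Sⁿ : G(z) ∈ M_{p,q}}`. -/
def lstratum (g : Em m → Mat n) (p q : ℕ) : Set (Em m × Mat n) :=
  {z | z.2.IsSymm ∧ Gmap g z ∈ stratum n p q}

/-- The norm `‖(u,H)‖ = sqrt(‖u‖² + ‖H‖²)` on `ℝᵐ × Sⁿ` (Frobenius norm on matrices). -/
def pnorm {m n : ℕ} (w : Em m × Mat n) : ℝ := Real.sqrt (‖w.1‖ ^ 2 + ‖w.2‖ ^ 2)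

/-- The weak strict Robinson constraint qualification (W-SRCQ) at `z`:
`g'(x)[ℝᵐ] + {PBPᵀ : B ∈ Sⁿ, B_{βγ} = 0, B_{γγ} = 0} = Sⁿ`
(for any eigenvalue decomposition `(P, lam)` of `G(z)`; independent of the choice). -/
def WSRCQ (g : Em m → Mat n) (z : Em m × Mat n) : Prop :=
  ∀ P lam, IsEigDecomp (Gmap g z) P lam →
    ∀ C : Mat n, C.IsSymm →
      ∃ (v : Em m) (B : Mat n), B.IsSymm ∧
        (∀ i j, lam i = 0 → lam j < 0 → B i j = 0) ∧
        (∀ i j, lam i < 0 → lam j < 0 → B i j = 0) ∧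
        C = fderiv ℝ g z.1 v + P * B * Pᵀ

/-- The constraint nondegeneracy at `z`:
`g'(x)[ℝᵐ] + {PBPᵀ : B ∈ Sⁿ, B_{ββ} = 0, B_{βγ} = 0, B_{γγ} = 0} = Sⁿ`. -/
def CNondeg (g : Em m → Mat n) (z : Em m × Mat n) : Prop :=
  ∀ P lam, IsEigDecomp (Gmap g z) P lam →
    ∀ C : Mat n, C.IsSymm →
      ∃ (v : Em m) (B : Mat n), B.IsSymm ∧
        (∀ i j, lam i = 0 → lam j = 0 → B i j = 0) ∧
        (∀ i j, lam i = 0 → lam j < 0 → B i j = 0) ∧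
        (∀ i j, lam i < 0 → lam j < 0 → B i j = 0) ∧
        C = fderiv ℝ g z.1 v + P * B * Pᵀ

/-- The strict Robinson constraint qualification (SRCQ) at a KKT pair `z`:
`g'(x)[ℝᵐ] + {PBPᵀ : B ∈ Sⁿ, B_{ββ} ⪰ 0, B_{βγ} = 0, B_{γγ} = 0} = Sⁿ`. -/
def SRCQ (g : Em m → Mat n) (z : Em m × Mat n) : Prop :=
  ∀ P lam, IsEigDecomp (Gmap g z) P lam →
    ∀ C : Mat n, C.IsSymm →
      ∃ (v : Em m) (B : Mat n), B.IsSymm ∧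
        (∀ u : Fin n → ℝ, (∀ i, lam i ≠ 0 → u i = 0) →
          0 ≤ ∑ i, ∑ j, u i * B i j * u j) ∧
        (∀ i j, lam i = 0 → lam j < 0 → B i j = 0) ∧
        (∀ i j, lam i < 0 → lam j < 0 → B i j = 0) ∧
        C = fderiv ℝ g z.1 v + P * B * Pᵀ

/-- The quadratic form
`Q(z,v) = ⟨v, ∇²ₓₓL(x,y)v⟩ + 2·Σ_{i∈α}Σ_{j∈γ} (−λⱼ/λᵢ)·([Pᵀ(g'(x)v)P]_{ij})²`. -/
def Qform (f : Em m → ℝ) (g : Em m → Mat n) (z : Em m × Mat n)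
    (P : Mat n) (lam : Fin n → ℝ) (v : Em m) : ℝ :=
  ⟪v, hessL f g z.1 z.2 v⟫ +
    2 * ∑ i : Fin n, ∑ j : Fin n,
      (if 0 < lam i ∧ lam j < 0 then
        (-lam j / lam i) * ((Pᵀ * fderiv ℝ g z.1 v * P) i j) ^ 2 else 0)

/-- `v ∈ appl(z)`: the blocks `ββ`, `βγ`, `γγ` of `Pᵀ(g'(x)v)P` vanish. -/
def memAppl (g : Em m → Mat n) (z : Em m × Mat n)
    (P : Mat n) (lam : Fin n → ℝ) (v : Em m) : Prop :=
  (∀ i j, lam i = 0 → lam j = 0 → (Pᵀ * fderiv ℝ g z.1 v * P) i j = 0) ∧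
  (∀ i j, lam i = 0 → lam j < 0 → (Pᵀ * fderiv ℝ g z.1 v * P) i j = 0) ∧
  (∀ i j, lam i < 0 → lam j < 0 → (Pᵀ * fderiv ℝ g z.1 v * P) i j = 0)

/-- `v ∈ app(z)`: the blocks `βγ`, `γγ` of `Pᵀ(g'(x)v)P` vanish. -/
def memApp (g : Em m → Mat n) (z : Em m × Mat n)
    (P : Mat n) (lam : Fin n → ℝ) (v : Em m) : Prop :=
  (∀ i j, lam i = 0 → lam j < 0 → (Pᵀ * fderiv ℝ g z.1 v * P) i j = 0) ∧
  (∀ i j, lam i < 0 → lam j < 0 → (Pᵀ * fderiv ℝ g z.1 v * P) i j = 0)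

/-- The weak second order condition (W-SOC) at `z`: `Q(z,v) ≠ 0` for every nonzero
`v ∈ appl(z)`. -/
def WSOC (f : Em m → ℝ) (g : Em m → Mat n) (z : Em m × Mat n) : Prop :=
  ∀ P lam, IsEigDecomp (Gmap g z) P lam →
    ∀ v : Em m, v ≠ 0 → memAppl g z P lam v → Qform f g z P lam v ≠ 0

/-- The strong second order sufficient condition (S-SOSC) at `z`: `Q(z,v) > 0` for every
nonzero `v ∈ app(z)`. -/
def SSOSC (f : Em m → ℝ) (g : Em m → Mat n) (z : Em m × Mat n) : Prop :=
  ∀ P lam, IsEigDecomp (Gmap g z) P lam →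
    ∀ v : Em m, v ≠ 0 → memApp g z P lam v → 0 < Qform f g z P lam v

/-- The second order necessary condition (SONC) at `z`. -/
def SONC (f : Em m → ℝ) (g : Em m → Mat n) (z : Em m × Mat n) : Prop :=
  ∀ P lam, IsEigDecomp (Gmap g z) P lam →
    ∀ v : Em m, v ≠ 0 →
      (∀ u : Fin n → ℝ, (∀ i, lam i ≠ 0 → u i = 0) →
        0 ≤ ∑ i, ∑ j, u i * (Pᵀ * fderiv ℝ g z.1 v * P) i j * u j) →
      memApp g z P lam v → 0 ≤ Qform f g z P lam v

/-- The W-SOC holds uniformly on a set `S`: there is `c > 0` with `Q(z,v) ≥ c‖v‖²` for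
every `z ∈ S` (in `ℝᵐ × Sⁿ`) and every `v ∈ appl(z)`. -/
def UnifWSOC (f : Em m → ℝ) (g : Em m → Mat n) (S : Set (Em m × Mat n)) : Prop :=
  ∃ c : ℝ, 0 < c ∧ ∀ z ∈ S, z.2.IsSymm →
    ∀ P lam, IsEigDecomp (Gmap g z) P lam →
      ∀ v : Em m, memAppl g z P lam v → c * ‖v‖ ^ 2 ≤ Qform f g z P lam v

/-- `H ∈ T_z`: `H ∈ Sⁿ` with `(PᵀHP)_{ββ} = 0`. -/
def memTz {n : ℕ} (P : Mat n) (lam : Fin n → ℝ) (H : Mat n) : Prop :=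
  H.IsSymm ∧ ∀ i j, lam i = 0 → lam j = 0 → (Pᵀ * H * P) i j = 0

/-- `Δ ∈ N_{G(z)}M_{p,q}`: `Δ ∈ Sⁿ` and `(PᵀΔP)_{ij} = 0` whenever `i ∉ β` or `j ∉ β`. -/
def memNormal {n : ℕ} (P : Mat n) (lam : Fin n → ℝ) (Δ : Mat n) : Prop :=
  Δ.IsSymm ∧ ∀ i j, (lam i ≠ 0 ∨ lam j ≠ 0) → (Pᵀ * Δ * P) i j = 0

/-- The map `ξ_z : T_z → Sⁿ`, `ξ_z(H) = P·M·Pᵀ`. -/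
def xiMap {n : ℕ} (P : Mat n) (lam : Fin n → ℝ) (H : Mat n) : Mat n :=
  P * (Matrix.of fun i j =>
    if 0 < lam i ∧ 0 < lam j then (Pᵀ * H * P) i j
    else if 0 < lam i ∧ lam j = 0 then (Pᵀ * H * P) i j
    else if lam i = 0 ∧ 0 < lam j then (Pᵀ * H * P) i j
    else if 0 < lam i ∧ lam j < 0 then (lam i / (lam i - lam j)) * (Pᵀ * H * P) i j
    else if lam i < 0 ∧ 0 < lam j then (lam j / (lam j - lam i)) * (Pᵀ * H * P) i j
    else 0) * Pᵀ

/-- The linear map `𝒜_z(v,H) = (∇²ₓₓL(x,y)v − ∇g(x)(g'(x)v) + ∇g(x)H, −g'(x)v + ξ_z(H))`. -/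
def Amap (f : Em m → ℝ) (g : Em m → Mat n) (z : Em m × Mat n)
    (P : Mat n) (lam : Fin n → ℝ) (v : Em m) (H : Mat n) : Em m × Mat n :=
  (hessL f g z.1 z.2 v - gradg g z.1 (fderiv ℝ g z.1 v) + gradg g z.1 H,
    - fderiv ℝ g z.1 v + xiMap P lam H)

/-- The positive inertia index of `A` is `p`. -/
def posInertiaIs {n : ℕ} (A : Mat n) (p : ℕ) : Prop :=
  ∃ P lam, IsEigDecomp A P lam ∧ {i : Fin n | 0 < lam i}.ncard = p

/-- The negative inertia index of `A` is `q`. -/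
def negInertiaIs {n : ℕ} (A : Mat n) (q : ℕ) : Prop :=
  ∃ P lam, IsEigDecomp A P lam ∧ {i : Fin n | lam i < 0}.ncard = q

end

section AuxLemmas

open Polynomial

lemma eig_charpoly {n : ℕ} {A P : Mat n} {lam : Fin n → ℝ}
    (h : IsEigDecomp A P lam) :
    A.charpoly = ∏ i : Fin n, (X - C (lam i)) := by
  obtain ⟨⟨hPPt, _⟩, _, hA⟩ := h
  have hmap1 : (P.map (C : ℝ → ℝ[X])) * (Pᵀ.map (C : ℝ → ℝ[X])) = 1 := by
    rw [← Matrix.map_mul (f := (C : ℝ →+* ℝ[X])), hPPt,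
      Matrix.map_one _ (map_zero _) (map_one _)]
  have key : charmatrix A =
      P.map (C : ℝ → ℝ[X]) * charmatrix (Matrix.diagonal lam) * Pᵀ.map (C : ℝ → ℝ[X]) := by
    rw [hA, charmatrix, charmatrix]
    rw [mul_sub, sub_mul]
    congr 1
    · rw [← (Matrix.scalar_commute (X : ℝ[X]) (Commute.all X) (P.map C)).eq, mul_assoc,
        hmap1, mul_one]
    · simp only [RingHom.mapMatrix_apply]
      rw [← Matrix.map_mul (f := (C : ℝ →+* ℝ[X])), ← Matrix.map_mul (f := (C : ℝ →+* ℝ[X]))]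
  have hdiag : charmatrix (Matrix.diagonal lam) =
      Matrix.diagonal (fun i => (X : ℝ[X]) - C (lam i)) := by
    refine Matrix.ext fun i j => ?_
    by_cases hij : i = j
    · subst hij; simp [charmatrix_apply_eq]
    · rw [charmatrix_apply_ne _ _ _ hij, Matrix.diagonal_apply_ne _ hij, map_zero, neg_zero,
        Matrix.diagonal_apply_ne _ hij]
  have hdet : (P.map (C : ℝ → ℝ[X])).det * (Pᵀ.map (C : ℝ → ℝ[X])).det = 1 := by
    rw [← Matrix.det_mul, hmap1, Matrix.det_one]
  calc A.charpoly = (charmatrix A).det := rfl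
    _ = (P.map (C : ℝ → ℝ[X])).det * (charmatrix (Matrix.diagonal lam)).det *
          (Pᵀ.map (C : ℝ → ℝ[X])).det := by rw [key, Matrix.det_mul, Matrix.det_mul]
    _ = (charmatrix (Matrix.diagonal lam)).det := by
          rw [mul_comm ((P.map (C : ℝ → ℝ[X])).det), mul_assoc, hdet, mul_one]
    _ = ∏ i : Fin n, (X - C (lam i)) := by rw [hdiag, Matrix.det_diagonal]

lemma eig_lam_unique {n : ℕ} {A P P' : Mat n} {lam lam' : Fin n → ℝ}
    (h : IsEigDecomp A P lam) (h' : IsEigDecomp A P' lam') : lam = lam' := by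
  have h1 : (∏ i : Fin n, (X - C (lam i))) = ∏ i : Fin n, (X - C (lam' i)) :=
    (eig_charpoly h).symm.trans (eig_charpoly h')
  have e : ∀ (f : Fin n → ℝ), (∏ i : Fin n, ((X : ℝ[X]) - C (f i))) =
      ((Finset.univ.val.map f).map (fun a => (X : ℝ[X]) - C a)).prod := by
    intro f
    rw [Finset.prod, Multiset.map_map]
    rfl
  have h2 : (Finset.univ.val.map lam) = (Finset.univ.val.map lam') := by
    have := congrArg Polynomial.roots h1
    rwa [e lam, e lam', roots_multiset_prod_X_sub_C, roots_multiset_prod_X_sub_C] at this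
  rw [Fin.univ_val_map, Fin.univ_val_map] at h2
  have h3 : (List.ofFn lam).Perm (List.ofFn lam') := Multiset.coe_eq_coe.1 h2
  have s1 : (List.ofFn lam).Pairwise (· ≥ ·) :=
    List.pairwise_ofFn.2 fun i j hij => h.2.1 hij.le
  have s2 : (List.ofFn lam').Pairwise (· ≥ ·) :=
    List.pairwise_ofFn.2 fun i j hij => h'.2.1 hij.le
  exact List.ofFn_injective (List.Perm.eq_of_pairwise' s1 s2 h3)

lemma ncard_filter_eq {n : ℕ} (Pr : Fin n → Prop) [DecidablePred Pr] :
    {i : Fin n | Pr i}.ncard = (Finset.univ.filter Pr).card := by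
  have : {i : Fin n | Pr i} = ↑(Finset.univ.filter Pr) := by ext i; simp
  rw [this, Set.ncard_coe_finset]

lemma antitone_pos_char {n p : ℕ} {lam : Fin n → ℝ} (hl : Antitone lam)
    (hc : {i : Fin n | 0 < lam i}.ncard = p) : ∀ i : Fin n, 0 < lam i ↔ (i : ℕ) < p := by
  classical
  rw [ncard_filter_eq] at hc
  intro i
  constructor
  · intro hi
    have hsub : Finset.Iic i ⊆ Finset.univ.filter (fun j => 0 < lam j) := by
      intro j hj
      simp only [Finset.mem_Iic] at hj
      simp only [Finset.mem_filter, Finset.mem_univ, true_and]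
      exact lt_of_lt_of_le hi (hl hj)
    have hle := Finset.card_le_card hsub
    rw [Fin.card_Iic] at hle
    omega
  · intro hi
    by_contra hpos
    push_neg at hpos
    have hsub : Finset.univ.filter (fun j => 0 < lam j) ⊆ Finset.Iio i := by
      intro j hj
      simp only [Finset.mem_filter, Finset.mem_univ, true_and] at hj
      simp only [Finset.mem_Iio]
      by_contra hji
      push_neg at hji
      exact absurd (lt_of_lt_of_le hj (hl hji)) (not_lt.2 hpos)
    have hle := Finset.card_le_card hsub
    rw [Fin.card_Iio] at hle
    omega

lemma antitone_neg_char {n q : ℕ} {lam : Fin n → ℝ} (hl : Antitone lam)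
    (hc : {i : Fin n | lam i < 0}.ncard = q) : ∀ i : Fin n, lam i < 0 ↔ n - q ≤ (i : ℕ) := by
  classical
  rw [ncard_filter_eq] at hc
  have hqn : q ≤ n := by
    rw [← hc]
    simpa using Finset.card_filter_le Finset.univ (fun j => lam j < 0)
  intro i
  have hin := i.isLt
  constructor
  · intro hi
    have hsub : Finset.Ici i ⊆ Finset.univ.filter (fun j => lam j < 0) := by
      intro j hj
      simp only [Finset.mem_Ici] at hj
      simp only [Finset.mem_filter, Finset.mem_univ, true_and]
      exact lt_of_le_of_lt (hl hj) hi
    have hle := Finset.card_le_card hsub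
    rw [Fin.card_Ici] at hle
    omega
  · intro hi
    by_contra hneg
    push_neg at hneg
    have hsub : Finset.univ.filter (fun j => lam j < 0) ⊆ Finset.Ioi i := by
      intro j hj
      simp only [Finset.mem_filter, Finset.mem_univ, true_and] at hj
      simp only [Finset.mem_Ioi]
      by_contra hji
      push_neg at hji
      exact absurd (lt_of_le_of_lt (hl hji) hj) (not_lt.2 hneg)
    have hle := Finset.card_le_card hsub
    rw [Fin.card_Ioi] at hle
    omega

lemma ncard_ge (n k : ℕ) (hk : k ≤ n) : {i : Fin n | k ≤ (i : ℕ)}.ncard = n - k := by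
  classical
  rw [ncard_filter_eq]
  have hmap : Finset.univ.filter (fun i : Fin n => k ≤ (i : ℕ)) =
      Finset.map ⟨fun j : Fin (n - k) => (⟨k + j, by omega⟩ : Fin n), by
        intro a b hab
        have : k + (a : ℕ) = k + (b : ℕ) := congrArg Fin.val hab
        exact Fin.val_inj.mp (by omega)⟩ Finset.univ := by
    ext i
    simp only [Finset.mem_filter, Finset.mem_univ, true_and, Finset.mem_map,
      Function.Embedding.coeFn_mk]
    constructor
    · intro hi
      exact ⟨⟨(i : ℕ) - k, by omega⟩, Fin.val_inj.mp (by show k + ((i : ℕ) - k) = (i : ℕ); omega)⟩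
    · rintro ⟨j, rfl⟩
      show k ≤ k + (j : ℕ); omega
  rw [hmap, Finset.card_map, Finset.card_univ, Fintype.card_fin]

end AuxLemmas

/-- Closedness of the W-SRCQ across strata: if the W-SRCQ holds on
`U ∩ M̃_{p,q}` for an open `U`, then it holds on `U ∩ M̃_{p,q'}` for every `0 ≤ q' ≤ q`. -/
theorem WSRCQ_closed_across_strata {m n p q : ℕ}
    (g : Em m → Mat n)
    (hg : ContDiff ℝ 2 g) (hgs : ∀ x, (g x).IsSymm)
    (hpq : p + q ≤ n)
    (U : Set (Em m × Mat n)) (hU : IsOpen U)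
    (h : ∀ z ∈ U ∩ lstratum g p q, WSRCQ g z) :
    ∀ q' : ℕ, q' ≤ q → ∀ z ∈ U ∩ lstratum g p q', WSRCQ g z := by
  intro q' hq' z hz
  obtain ⟨hzU, hzsym, hzstr⟩ := hz
  intro P lam hdec C hC
  obtain ⟨P₀, lam₀, hdec₀, hp₀, hq₀⟩ := hzstr
  have hlam : lam = lam₀ := eig_lam_unique hdec hdec₀
  have hp : {i : Fin n | 0 < lam i}.ncard = p := by rw [hlam]; exact hp₀
  have hqc : {i : Fin n | lam i < 0}.ncard = q' := by rw [hlam]; exact hq₀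
  have hpos := antitone_pos_char hdec.2.1 hp
  have hneg := antitone_neg_char hdec.2.1 hqc
  have hqn : q ≤ n := le_trans (Nat.le_add_left _ _) hpq
  have hpn : p ≤ n - q := by omega
  have hblock : ∀ i : Fin n, n - q ≤ (i : ℕ) → (i : ℕ) < n - q' → lam i = 0 := by
    intro i h1 h2
    have hnp : ¬ lam i < 0 := by rw [hneg]; omega
    have hpp : ¬ 0 < lam i := by rw [hpos i]; omega
    linarith [not_lt.1 hnp, not_lt.1 hpp]
  set χ : Fin n → ℝ := fun i => if n - q ≤ (i : ℕ) ∧ (i : ℕ) < n - q' then (-1 : ℝ) else 0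
    with hχ
  have hχi : ∀ i : Fin n,
      χ i = if n - q ≤ (i : ℕ) ∧ (i : ℕ) < n - q' then (-1 : ℝ) else 0 := fun i => by rw [hχ]
  set M : Mat n := P * Matrix.diagonal χ * Pᵀ with hM
  set F : ℝ → Em m × Mat n := fun t => (z.1, z.2 + t • M) with hF
  have hFc : Continuous F := by
    apply Continuous.prodMk continuous_const
    exact continuous_const.add (continuous_id.smul continuous_const)
  have hF0 : F 0 = z := by rw [hF]; simp
  have hUnb : F ⁻¹' U ∈ nhds (0 : ℝ) := by
    apply hFc.continuousAt.preimage_mem_nhds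
    rw [hF0]
    exact hU.mem_nhds hzU
  obtain ⟨ε, hε, hball⟩ := Metric.mem_nhds_iff.1 hUnb
  have hcex : ∃ c : ℝ, 0 < c ∧ ∀ j, lam j < 0 → c ≤ -lam j := by
    by_cases hne : (Finset.univ.filter (fun j : Fin n => lam j < 0)).Nonempty
    · refine ⟨(Finset.univ.filter (fun j : Fin n => lam j < 0)).inf' hne (fun j => -lam j),
        ?_, ?_⟩
      · rw [Finset.lt_inf'_iff]
        intro j hj
        simp only [Finset.mem_filter, Finset.mem_univ, true_and] at hj
        linarith
      · intro j hj
        refine Finset.inf'_le (fun j => -lam j) ?_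
        simp only [Finset.mem_filter, Finset.mem_univ, true_and]
        exact hj
    · refine ⟨1, one_pos, fun j hj => absurd ?_ hne⟩
      refine ⟨j, ?_⟩
      simp only [Finset.mem_filter, Finset.mem_univ, true_and]
      exact hj
  obtain ⟨c, hc, hcle⟩ := hcex
  set t : ℝ := min (ε / 2) c with ht
  have ht0 : 0 < t := lt_min (by linarith) hc
  have htc : t ≤ c := min_le_right _ _
  have htU : F t ∈ U := by
    apply hball
    rw [Metric.mem_ball, Real.dist_eq, sub_zero, abs_of_pos ht0]
    exact lt_of_le_of_lt (min_le_left _ _) (by linarith)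
  set lamt : Fin n → ℝ := fun i => lam i + t * χ i with hlamt
  have hlami : ∀ i : Fin n, lamt i = lam i + t * χ i := fun i => by rw [hlamt]
  have hval : ∀ i : Fin n,
      lamt i = if n - q ≤ (i : ℕ) ∧ (i : ℕ) < n - q' then -t else lam i := by
    intro i
    rw [hlami i, hχi i]
    by_cases hi : n - q ≤ (i : ℕ) ∧ (i : ℕ) < n - q'
    · rw [if_pos hi, if_pos hi, hblock i hi.1 hi.2]; ring
    · rw [if_neg hi, if_neg hi, mul_zero, add_zero]
  have hanti : Antitone lamt := by
    intro i j hij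
    have hij' : (i : ℕ) ≤ (j : ℕ) := hij
    rw [hval i, hval j]
    by_cases hi : n - q ≤ (i : ℕ) ∧ (i : ℕ) < n - q' <;>
      by_cases hj : n - q ≤ (j : ℕ) ∧ (j : ℕ) < n - q'
    · rw [if_pos hi, if_pos hj]
    · rw [if_pos hi, if_neg hj]
      have hjq : n - q' ≤ (j : ℕ) := by omega
      have hjneg : lam j < 0 := (hneg j).2 hjq
      have := hcle j hjneg
      linarith
    · rw [if_neg hi, if_pos hj]
      have hiq : ¬ (n - q' ≤ (i : ℕ)) := by omega
      have : ¬ lam i < 0 := by rw [hneg]; exact hiq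
      linarith [not_lt.1 this]
    · rw [if_neg hi, if_neg hj]
      exact hdec.2.1 hij
  have hsetneg : {i : Fin n | lamt i < 0} = {i : Fin n | n - q ≤ (i : ℕ)} := by
    ext i
    simp only [Set.mem_setOf_eq]
    rw [hval i]
    by_cases hi : n - q ≤ (i : ℕ) ∧ (i : ℕ) < n - q'
    · rw [if_pos hi]
      exact ⟨fun _ => hi.1, fun _ => by linarith⟩
    · rw [if_neg hi]
      constructor
      · intro hl
        have := (hneg i).1 hl
        omega
      · intro hge
        exact (hneg i).2 (by omega)
  have hsetpos : {i : Fin n | 0 < lamt i} = {i : Fin n | 0 < lam i} := by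
    ext i
    simp only [Set.mem_setOf_eq]
    rw [hval i]
    by_cases hi : n - q ≤ (i : ℕ) ∧ (i : ℕ) < n - q'
    · rw [if_pos hi]
      have h0 := hblock i hi.1 hi.2
      constructor <;> intro hh <;> linarith
    · rw [if_neg hi]
  have hcntn : {i : Fin n | lamt i < 0}.ncard = q := by
    rw [hsetneg, ncard_ge n (n - q) (by omega)]
    omega
  have hcntp : {i : Fin n | 0 < lamt i}.ncard = p := by rw [hsetpos]; exact hp
  have hdecomp : IsEigDecomp (Gmap g (F t)) P lamt := by
    refine ⟨hdec.1, hanti, ?_⟩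
    have hd : Matrix.diagonal lamt = Matrix.diagonal lam + t • Matrix.diagonal χ := by
      rw [← Matrix.diagonal_smul, ← Matrix.diagonal_add]
      rfl
    have hGt : Gmap g (F t) = P * Matrix.diagonal lam * Pᵀ + t • M := by
      have h1 : Gmap g (F t) = g z.1 + (z.2 + t • M) := by simp only [hF, Gmap]
      have h2 : g z.1 + z.2 = P * Matrix.diagonal lam * Pᵀ := hdec.2.2
      rw [h1, ← add_assoc, h2]
    rw [hGt, hd, Matrix.mul_add, Matrix.add_mul, hM, Matrix.mul_smul, Matrix.smul_mul]
  have hMsym : Mᵀ = M := by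
    rw [hM, Matrix.transpose_mul, Matrix.transpose_mul, Matrix.transpose_transpose,
      Matrix.diagonal_transpose, ← Matrix.mul_assoc]
  have hsymt : (F t).2.IsSymm := by
    have h1 : (F t).2 = z.2 + t • M := by rw [hF]
    rw [Matrix.IsSymm, h1, Matrix.transpose_add, Matrix.transpose_smul, hMsym, hzsym]
  have hFstr : F t ∈ U ∩ lstratum g p q :=
    ⟨htU, hsymt, P, lamt, hdecomp, hcntp, hcntn⟩
  obtain ⟨v, B, hBs, hB1, hB2, hCeq⟩ := h (F t) hFstr P lamt hdecomp C hC
  have hfst : (F t).1 = z.1 := by rw [hF]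
  rw [hfst] at hCeq
  refine ⟨v, B, hBs, ?_, ?_, hCeq⟩
  · intro i j hi hj
    have hjt : lamt j < 0 := by
      rw [hval j, if_neg (by have := (hneg j).1 hj; omega)]
      exact hj
    by_cases hib : n - q ≤ (i : ℕ) ∧ (i : ℕ) < n - q'
    · exact hB2 i j (by rw [hval i, if_pos hib]; linarith) hjt
    · exact hB1 i j (by rw [hval i, if_neg hib]; exact hi) hjt
  · intro i j hi hj
    have hit : lamt i < 0 := by
      rw [hval i, if_neg (by have := (hneg i).1 hi; omega)]
      exact hi
    have hjt : lamt j < 0 := by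
      rw [hval j, if_neg (by have := (hneg j).1 hj; omega)]
      exact hj
    exact hB2 i j hit hjt
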